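/- arXiv:2101.00242 — 4 statements merged into one kernel-verified Lean document; each statement's English description precedes it below -/
import Mathlib

section
/- Characteristic decomposition (equations (2.15)). Let κ > 0 and let Ω ⊂ ℝ² be open. Let θ, ω : Ω → ℝ be C² functions with ω(x,y) ∈ (0, π/2). Define the directional derivative operators ∂̄⁺ = cos(θ+ω)∂_x + sin(θ+ω)∂_y and ∂̄⁻ = cos(θ−ω)∂_x + sin(θ−ω)∂_y, and set Ξ = (1/(4κ))·ln( sin²ω / (κ + sin²ω) ). Suppose that on Ω: ∂̄⁺θ + sin(2ω)·∂̄⁺Ξ = 0 and ∂̄⁻θ − sin(2ω)·∂̄⁻Ξ = 0 (system (2.13)). Then the functions U := ∂̄⁺Ξ and V := ∂̄⁻Ξ satisfy on Ω: ∂̄⁻U = (κU/cos²ω)·(U − cos(2ω)·V) + (U/cos²ω)·(U + cos²(2ω)·V) and ∂̄⁺V = (κV/cos²ω)·(V − cos(2ω)·U) + (V/cos²ω)·(V + cos²(2ω)·U). -/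
/-- Partial derivative in the first (x) variable. -/
noncomputable def pdx (f : ℝ × ℝ → ℝ) (p : ℝ × ℝ) : ℝ := fderiv ℝ f p (1, 0)

/-- Partial derivative in the second (y) variable. -/
noncomputable def pdy (f : ℝ × ℝ → ℝ) (p : ℝ × ℝ) : ℝ := fderiv ℝ f p (0, 1)

/-- Derivative along the positive characteristic direction (inclination θ+ω). -/
noncomputable def Dp (θ ω f : ℝ × ℝ → ℝ) (p : ℝ × ℝ) : ℝ :=
  Real.cos (θ p + ω p) * pdx f p + Real.sin (θ p + ω p) * pdy f p

/-- Derivative along the negative characteristic direction (inclination θ−ω). -/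
noncomputable def Dm (θ ω f : ℝ × ℝ → ℝ) (p : ℝ × ℝ) : ℝ :=
  Real.cos (θ p - ω p) * pdx f p + Real.sin (θ p - ω p) * pdy f p

lemma eval2 (L : (ℝ×ℝ) →L[ℝ] ℝ) (c s : ℝ) : L (c, s) = c * L (1,0) + s * L (0,1) := by
  have h : ((c,s) : ℝ×ℝ) = c • ((1:ℝ),(0:ℝ)) + s • ((0:ℝ),(1:ℝ)) := by
    simp [Prod.smul_def]
  rw [h, map_add, map_smul, map_smul, smul_eq_mul, smul_eq_mul]

lemma hasDp (θ ω f : ℝ×ℝ→ℝ) (p : ℝ×ℝ) (hθ : DifferentiableAt ℝ θ p)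
    (hω : DifferentiableAt ℝ ω p) (hf : ContDiffAt ℝ 2 f p) :
    ∃ D : (ℝ×ℝ) →L[ℝ] ℝ, HasFDerivAt (fun q => Dp θ ω f q) D p ∧ ∀ y,
      D y = (fderiv ℝ θ p y + fderiv ℝ ω p y) *
              (-Real.sin (θ p + ω p) * fderiv ℝ f p (1,0)
                + Real.cos (θ p + ω p) * fderiv ℝ f p (0,1))
            + fderiv ℝ (fderiv ℝ f) p y (Real.cos (θ p + ω p), Real.sin (θ p + ω p)) := by
  set a := θ p + ω p with ha_def
  set L : (ℝ×ℝ) →L[ℝ] ℝ := fderiv ℝ θ p + fderiv ℝ ω p with hL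
  set H := fderiv ℝ (fderiv ℝ f) p with hH
  have ha : HasFDerivAt (fun q => θ q + ω q) L p := hθ.hasFDerivAt.add hω.hasFDerivAt
  have hcos : HasFDerivAt (fun q => Real.cos (θ q + ω q)) ((-Real.sin a) • L) p :=
    by have := (Real.hasDerivAt_cos a).comp_hasFDerivAt p ha; exact this
  have hsin : HasFDerivAt (fun q => Real.sin (θ q + ω q)) ((Real.cos a) • L) p :=
    by have := (Real.hasDerivAt_sin a).comp_hasFDerivAt p ha; exact this
  have hfd : HasFDerivAt (fderiv ℝ f) H p :=
    ((hf.fderiv_right (m := 1) (by norm_num)).differentiableAt one_ne_zero).hasFDerivAt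
  have h10 : HasFDerivAt (fun q => fderiv ℝ f q (1,0))
      ((ContinuousLinearMap.apply ℝ ℝ ((1:ℝ),(0:ℝ))).comp H) p :=
    (ContinuousLinearMap.apply ℝ ℝ ((1:ℝ),(0:ℝ))).hasFDerivAt.comp p hfd
  have h01 : HasFDerivAt (fun q => fderiv ℝ f q (0,1))
      ((ContinuousLinearMap.apply ℝ ℝ ((0:ℝ),(1:ℝ))).comp H) p :=
    (ContinuousLinearMap.apply ℝ ℝ ((0:ℝ),(1:ℝ))).hasFDerivAt.comp p hfd
  have hD := (hcos.mul h10).add (hsin.mul h01)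
  refine ⟨_, hD, ?_⟩
  intro y
  simp only [ContinuousLinearMap.add_apply, ContinuousLinearMap.smul_apply,
    ContinuousLinearMap.comp_apply, ContinuousLinearMap.apply_apply, smul_eq_mul]
  rw [eval2 (H y) (Real.cos a) (Real.sin a), hL]
  simp only [ContinuousLinearMap.add_apply]
  ring
lemma hasDm (θ ω f : ℝ×ℝ→ℝ) (p : ℝ×ℝ) (hθ : DifferentiableAt ℝ θ p)
    (hω : DifferentiableAt ℝ ω p) (hf : ContDiffAt ℝ 2 f p) :
    ∃ D : (ℝ×ℝ) →L[ℝ] ℝ, HasFDerivAt (fun q => Dm θ ω f q) D p ∧ ∀ y,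
      D y = (fderiv ℝ θ p y - fderiv ℝ ω p y) *
              (-Real.sin (θ p - ω p) * fderiv ℝ f p (1,0)
                + Real.cos (θ p - ω p) * fderiv ℝ f p (0,1))
            + fderiv ℝ (fderiv ℝ f) p y (Real.cos (θ p - ω p), Real.sin (θ p - ω p)) := by
  set a := θ p - ω p with ha_def
  set L : (ℝ×ℝ) →L[ℝ] ℝ := fderiv ℝ θ p - fderiv ℝ ω p with hL
  set H := fderiv ℝ (fderiv ℝ f) p with hH
  have ha : HasFDerivAt (fun q => θ q - ω q) L p := hθ.hasFDerivAt.sub hω.hasFDerivAt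
  have hcos : HasFDerivAt (fun q => Real.cos (θ q - ω q)) ((-Real.sin a) • L) p :=
    by have := (Real.hasDerivAt_cos a).comp_hasFDerivAt p ha; exact this
  have hsin : HasFDerivAt (fun q => Real.sin (θ q - ω q)) ((Real.cos a) • L) p :=
    by have := (Real.hasDerivAt_sin a).comp_hasFDerivAt p ha; exact this
  have hfd : HasFDerivAt (fderiv ℝ f) H p :=
    ((hf.fderiv_right (m := 1) (by norm_num)).differentiableAt one_ne_zero).hasFDerivAt
  have h10 : HasFDerivAt (fun q => fderiv ℝ f q (1,0))
      ((ContinuousLinearMap.apply ℝ ℝ ((1:ℝ),(0:ℝ))).comp H) p :=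
    (ContinuousLinearMap.apply ℝ ℝ ((1:ℝ),(0:ℝ))).hasFDerivAt.comp p hfd
  have h01 : HasFDerivAt (fun q => fderiv ℝ f q (0,1))
      ((ContinuousLinearMap.apply ℝ ℝ ((0:ℝ),(1:ℝ))).comp H) p :=
    (ContinuousLinearMap.apply ℝ ℝ ((0:ℝ),(1:ℝ))).hasFDerivAt.comp p hfd
  have hD := (hcos.mul h10).add (hsin.mul h01)
  refine ⟨_, hD, ?_⟩
  intro y
  simp only [ContinuousLinearMap.add_apply, ContinuousLinearMap.smul_apply,
    ContinuousLinearMap.comp_apply, ContinuousLinearMap.apply_apply, smul_eq_mul]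
  rw [eval2 (H y) (Real.cos a) (Real.sin a), hL]
  simp only [ContinuousLinearMap.sub_apply]
  ring
lemma xiFacts (κ : ℝ) (hκ : 0 < κ) (ω Ξ : ℝ×ℝ→ℝ) (p : ℝ×ℝ) (hωp : ContDiffAt ℝ 2 ω p)
    (hW : ω p ∈ Set.Ioo 0 (Real.pi/2))
    (hΞ : ∀ q, Ξ q = (1/(4*κ)) * Real.log ((Real.sin (ω q))^2/(κ + (Real.sin (ω q))^2))) :
    ContDiffAt ℝ 2 Ξ p ∧ fderiv ℝ Ξ p =
      (Real.cos (ω p)/(2*Real.sin (ω p)*(κ + Real.sin (ω p)^2))) • fderiv ℝ ω p := by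
  have hπ := Real.pi_pos
  have hsW : 0 < Real.sin (ω p) := Real.sin_pos_of_pos_of_lt_pi hW.1 (by linarith [hW.2])
  have hcW : 0 < Real.cos (ω p) := Real.cos_pos_of_mem_Ioo ⟨by linarith [hW.1], hW.2⟩
  have hden : ∀ t : ℝ, (0:ℝ) < κ + Real.sin t ^ 2 := fun t => by positivity
  set F : ℝ → ℝ := fun t => (1/(4*κ)) * Real.log (Real.sin t ^ 2/(κ + Real.sin t ^ 2)) with hF_def
  have hΞF : Ξ = F ∘ ω := funext fun q => hΞ q
  have hgC : ContDiff ℝ 2 (fun t : ℝ => Real.sin t ^ 2/(κ + Real.sin t ^ 2)) :=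
    ContDiff.div (Real.contDiff_sin.pow 2) (contDiff_const.add (Real.contDiff_sin.pow 2))
      (fun t => (hden t).ne')
  have hgW : Real.sin (ω p) ^ 2/(κ + Real.sin (ω p) ^ 2) ≠ 0 :=
    ne_of_gt (div_pos (pow_pos hsW 2) (hden (ω p)))
  have hFC : ContDiffAt ℝ 2 F (ω p) :=
    contDiffAt_const.mul (ContDiffAt.log hgC.contDiffAt hgW)
  have hΞC : ContDiffAt ℝ 2 Ξ p := by
    rw [hΞF]; exact hFC.comp p hωp
  have hn : HasDerivAt (fun t : ℝ => Real.sin t ^ 2)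
      (2 * Real.sin (ω p) ^ 1 * Real.cos (ω p)) (ω p) := by
    simpa using (Real.hasDerivAt_sin (ω p)).fun_pow 2
  have hd : HasDerivAt (fun t : ℝ => κ + Real.sin t ^ 2)
      (2 * Real.sin (ω p) ^ 1 * Real.cos (ω p)) (ω p) := hn.const_add κ
  have hq := hn.div hd (hden (ω p)).ne'
  have hlog := hq.log hgW
  have hFW' := hlog.const_mul ((1:ℝ)/(4*κ))
  have hFW : HasDerivAt F (Real.cos (ω p)/(2*Real.sin (ω p)*(κ + Real.sin (ω p)^2))) (ω p) := by
    refine hFW'.congr_deriv ?_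
    rw [Pi.div_apply]
    field_simp
    ring
  have hΞd : HasFDerivAt Ξ ((Real.cos (ω p)/(2*Real.sin (ω p)*(κ + Real.sin (ω p)^2))) •
      fderiv ℝ ω p) p := by
    rw [hΞF]
    exact hFW.comp_hasFDerivAt p (hωp.differentiableAt (by norm_num)).hasFDerivAt
  exact ⟨hΞC, hΞd.fderiv⟩
lemma algM (s2 c2 u vm tv tw ov ow pa pb ta tb hx hxs ht hts : ℝ)
    (hs2ne : s2 ≠ 0)
    (e1 : (tv + ov) * ta + ht + (s2 * ((tv + ov) * pa + hx) + u * (c2 * (2 * ov))) = 0)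
    (e2 : (tw - ow) * tb + hts - (s2 * ((tw - ow) * pb + hxs) + vm * (c2 * (2 * ow))) = 0)
    (hsymX : hx = hxs) (hsymT : ht = hts)
    (hs1 : tw + s2 * u = 0) (hs2 : tv - s2 * vm = 0)
    (g1 : s2 * pa = c2 * u - vm) (g2 : s2 * pb = u - c2 * vm)
    (g1T : s2 * ta = c2 * tw - tv) (g2T : s2 * tb = tw - c2 * tv) :
    s2 * (s2 * ((tv + ov) * pa + hx)) = s2 * (s2 * u * (u + c2 * vm) + ow * (u - c2 * vm))
    ∧ s2 * (s2 * ((tw - ow) * pb + hxs)) =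
      s2 * (s2 * vm * (vm + c2 * u) + ov * (vm - c2 * u)) := by
  have htv : tv = s2 * vm := by linarith
  have htw : tw = -(s2 * u) := by linarith
  have hta : ta = -(c2*u) - vm := by
    have h : s2 * ta = s2 * (-(c2*u) - vm) := by rw [g1T, htv, htw]; ring
    exact mul_left_cancel₀ hs2ne h
  have htb : tb = -u - c2*vm := by
    have h : s2 * tb = s2 * (-u - c2*vm) := by rw [g2T, htv, htw]; ring
    exact mul_left_cancel₀ hs2ne h
  subst htv htw hta htb hsymX hsymT
  constructor
  · linear_combination (s2/2)*e1 - (s2/2)*e2 + (s2*(s2*vm+ov)/2)*g1 + (s2*(s2*u+ow)/2)*g2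
  · linear_combination (s2/2)*e1 - (s2/2)*e2 - (s2*(s2*vm+ov)/2)*g1 - (s2*(s2*u+ow)/2)*g2
lemma algFin (s2 c2 sw cw u vm m ow k : ℝ) (hsw : 0 < sw) (hcw : 0 < cw)
    (key : s2 * m = s2 * u * (u + c2 * vm) + ow * (u - c2 * vm))
    (how : cw * ow = 2 * sw * (k + sw^2) * u)
    (hs2t : s2 = 2 * sw * cw) (hc2t : c2 = cw^2 - sw^2) (hpy : sw^2 + cw^2 = 1) :
    m = k * u / cw^2 * (u - c2 * vm) + u / cw^2 * (u + c2^2 * vm) := by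
  have h2 : (2*sw)*(cw^2*m) = (2*sw)*(k*u*(u - c2*vm) + u*(u + c2^2*vm)) := by
    linear_combination cw*key + (u - c2*vm)*how + (cw*u*(u + c2*vm) - cw*m)*hs2t
      + 2*sw*u*u*hpy - 2*sw*u*vm*c2*hc2t
  have h3 := mul_left_cancel₀ (by positivity : (2*sw : ℝ) ≠ 0) h2
  field_simp
  linear_combination h3
/-- Characteristic decomposition (equations (2.15)). -/
theorem stmt_10 (κ : ℝ) (hκ : 0 < κ) (Ω : Set (ℝ × ℝ)) (hΩ : IsOpen Ω)
    (θ ω Ξ : ℝ × ℝ → ℝ)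
    (hθ : ContDiffOn ℝ 2 θ Ω) (hω : ContDiffOn ℝ 2 ω Ω)
    (hrange : ∀ p ∈ Ω, ω p ∈ Set.Ioo 0 (Real.pi/2))
    (hΞ : ∀ p, Ξ p = (1/(4*κ)) *
      Real.log ((Real.sin (ω p))^2 / (κ + (Real.sin (ω p))^2)))
    (hsys : ∀ p ∈ Ω,
      Dp θ ω θ p + Real.sin (2 * ω p) * Dp θ ω Ξ p = 0 ∧
      Dm θ ω θ p - Real.sin (2 * ω p) * Dm θ ω Ξ p = 0) :
    ∀ p ∈ Ω,
      Dm θ ω (fun q => Dp θ ω Ξ q) p =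
        (κ * Dp θ ω Ξ p / (Real.cos (ω p))^2) *
          (Dp θ ω Ξ p - Real.cos (2 * ω p) * Dm θ ω Ξ p)
        + (Dp θ ω Ξ p / (Real.cos (ω p))^2) *
          (Dp θ ω Ξ p + (Real.cos (2 * ω p))^2 * Dm θ ω Ξ p) ∧
      Dp θ ω (fun q => Dm θ ω Ξ q) p =
        (κ * Dm θ ω Ξ p / (Real.cos (ω p))^2) *
          (Dm θ ω Ξ p - Real.cos (2 * ω p) * Dp θ ω Ξ p)
        + (Dm θ ω Ξ p / (Real.cos (ω p))^2) *
          (Dm θ ω Ξ p + (Real.cos (2 * ω p))^2 * Dp θ ω Ξ p) := by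
  intro p hp
  have hθp : ContDiffAt ℝ 2 θ p := hθ.contDiffAt (hΩ.mem_nhds hp)
  have hωp : ContDiffAt ℝ 2 ω p := hω.contDiffAt (hΩ.mem_nhds hp)
  have hθd : DifferentiableAt ℝ θ p := hθp.differentiableAt (by norm_num)
  have hωd : DifferentiableAt ℝ ω p := hωp.differentiableAt (by norm_num)
  obtain ⟨hΞC, hLΞ⟩ := xiFacts κ hκ ω Ξ p hωp (hrange p hp) hΞ
  obtain ⟨DPΞ, hDPΞ, vPΞ⟩ := hasDp θ ω Ξ p hθd hωd hΞC
  obtain ⟨DMΞ, hDMΞ, vMΞ⟩ := hasDm θ ω Ξ p hθd hωd hΞC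
  obtain ⟨DPθ, hDPθ, vPθ⟩ := hasDp θ ω θ p hθd hωd hθp
  obtain ⟨DMθ, hDMθ, vMθ⟩ := hasDm θ ω θ p hθd hωd hθp
  have h2ω : HasFDerivAt (fun q => Real.sin (2 * ω q))
      (Real.cos (2 * ω p) • ((2:ℝ) • fderiv ℝ ω p)) p :=
    by have := (Real.hasDerivAt_sin (2 * ω p)).comp_hasFDerivAt p (hωd.hasFDerivAt.const_mul 2); exact this
  -- differentiate first system equation
  have hΦ1 : HasFDerivAt (fun q => Dp θ ω θ q + Real.sin (2 * ω q) * Dp θ ω Ξ q)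
      (DPθ + (Real.sin (2 * ω p) • DPΞ +
        (Dp θ ω Ξ p) • (Real.cos (2 * ω p) • (2:ℝ) • fderiv ℝ ω p))) p :=
    hDPθ.add (h2ω.mul hDPΞ)
  have hz1 : (DPθ + (Real.sin (2 * ω p) • DPΞ +
      (Dp θ ω Ξ p) • (Real.cos (2 * ω p) • (2:ℝ) • fderiv ℝ ω p))) = 0 := by
    have hev : (fun q => Dp θ ω θ q + Real.sin (2 * ω q) * Dp θ ω Ξ q)
        =ᶠ[nhds p] (fun _ => (0:ℝ)) :=
      Filter.eventuallyEq_of_mem (hΩ.mem_nhds hp) (fun q hq => (hsys q hq).1)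
    have h1 := hΦ1.fderiv
    rw [hev.fderiv_eq, fderiv_fun_const] at h1
    exact h1.symm.trans rfl
  have hΦ2 : HasFDerivAt (fun q => Dm θ ω θ q - Real.sin (2 * ω q) * Dm θ ω Ξ q)
      (DMθ - (Real.sin (2 * ω p) • DMΞ +
        (Dm θ ω Ξ p) • (Real.cos (2 * ω p) • (2:ℝ) • fderiv ℝ ω p))) p :=
    hDMθ.sub (h2ω.mul hDMΞ)
  have hz2 : (DMθ - (Real.sin (2 * ω p) • DMΞ +
      (Dm θ ω Ξ p) • (Real.cos (2 * ω p) • (2:ℝ) • fderiv ℝ ω p))) = 0 := by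
    have hev : (fun q => Dm θ ω θ q - Real.sin (2 * ω q) * Dm θ ω Ξ q)
        =ᶠ[nhds p] (fun _ => (0:ℝ)) :=
      Filter.eventuallyEq_of_mem (hΩ.mem_nhds hp) (fun q hq => (hsys q hq).2)
    have h1 := hΦ2.fderiv
    rw [hev.fderiv_eq, fderiv_fun_const] at h1
    exact h1.symm.trans rfl

  -- scalar versions of differentiated system
  have e1 : ((Real.cos (θ p - ω p)*fderiv ℝ θ p (1,0) + Real.sin (θ p - ω p)*fderiv ℝ θ p (0,1)) + (Real.cos (θ p - ω p)*fderiv ℝ ω p (1,0) + Real.sin (θ p - ω p)*fderiv ℝ ω p (0,1))) * (-Real.sin (θ p + ω p)*fderiv ℝ θ p (1,0) + Real.cos (θ p + ω p)*fderiv ℝ θ p (0,1)) + fderiv ℝ (fderiv ℝ θ) p (Real.cos (θ p - ω p), Real.sin (θ p - ω p)) (Real.cos (θ p + ω p), Real.sin (θ p + ω p))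
      + (Real.sin (2 * ω p) * (((Real.cos (θ p - ω p)*fderiv ℝ θ p (1,0) + Real.sin (θ p - ω p)*fderiv ℝ θ p (0,1)) + (Real.cos (θ p - ω p)*fderiv ℝ ω p (1,0) + Real.sin (θ p - ω p)*fderiv ℝ ω p (0,1))) * (-Real.sin (θ p + ω p)*fderiv ℝ Ξ p (1,0) + Real.cos (θ p + ω p)*fderiv ℝ Ξ p (0,1)) + fderiv ℝ (fderiv ℝ Ξ) p (Real.cos (θ p - ω p), Real.sin (θ p - ω p)) (Real.cos (θ p + ω p), Real.sin (θ p + ω p)))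
        + ((Real.cos (θ p + ω p)*fderiv ℝ Ξ p (1,0) + Real.sin (θ p + ω p)*fderiv ℝ Ξ p (0,1))) * (Real.cos (2 * ω p) * (2 * ((Real.cos (θ p - ω p)*fderiv ℝ ω p (1,0) + Real.sin (θ p - ω p)*fderiv ℝ ω p (0,1)))))) = 0 := by
    have e1v := congrArg (fun L : (ℝ×ℝ) →L[ℝ] ℝ => L (Real.cos (θ p - ω p), Real.sin (θ p - ω p))) hz1
    simp only [ContinuousLinearMap.add_apply, ContinuousLinearMap.smul_apply,
      ContinuousLinearMap.zero_apply, smul_eq_mul] at e1v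
    rw [vPθ, vPΞ, eval2 (fderiv ℝ θ p) (Real.cos (θ p - ω p)) (Real.sin (θ p - ω p)),
      eval2 (fderiv ℝ ω p) (Real.cos (θ p - ω p)) (Real.sin (θ p - ω p))] at e1v
    simp only [Dp, pdx, pdy] at e1v
    linear_combination e1v
  have e2 : ((Real.cos (θ p + ω p)*fderiv ℝ θ p (1,0) + Real.sin (θ p + ω p)*fderiv ℝ θ p (0,1)) - (Real.cos (θ p + ω p)*fderiv ℝ ω p (1,0) + Real.sin (θ p + ω p)*fderiv ℝ ω p (0,1))) * (-Real.sin (θ p - ω p)*fderiv ℝ θ p (1,0) + Real.cos (θ p - ω p)*fderiv ℝ θ p (0,1)) + fderiv ℝ (fderiv ℝ θ) p (Real.cos (θ p + ω p), Real.sin (θ p + ω p)) (Real.cos (θ p - ω p), Real.sin (θ p - ω p))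
      - (Real.sin (2 * ω p) * (((Real.cos (θ p + ω p)*fderiv ℝ θ p (1,0) + Real.sin (θ p + ω p)*fderiv ℝ θ p (0,1)) - (Real.cos (θ p + ω p)*fderiv ℝ ω p (1,0) + Real.sin (θ p + ω p)*fderiv ℝ ω p (0,1))) * (-Real.sin (θ p - ω p)*fderiv ℝ Ξ p (1,0) + Real.cos (θ p - ω p)*fderiv ℝ Ξ p (0,1)) + fderiv ℝ (fderiv ℝ Ξ) p (Real.cos (θ p + ω p), Real.sin (θ p + ω p)) (Real.cos (θ p - ω p), Real.sin (θ p - ω p)))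
        + ((Real.cos (θ p - ω p)*fderiv ℝ Ξ p (1,0) + Real.sin (θ p - ω p)*fderiv ℝ Ξ p (0,1))) * (Real.cos (2 * ω p) * (2 * ((Real.cos (θ p + ω p)*fderiv ℝ ω p (1,0) + Real.sin (θ p + ω p)*fderiv ℝ ω p (0,1)))))) = 0 := by
    have e2v := congrArg (fun L : (ℝ×ℝ) →L[ℝ] ℝ => L (Real.cos (θ p + ω p), Real.sin (θ p + ω p))) hz2
    simp only [ContinuousLinearMap.sub_apply, ContinuousLinearMap.add_apply,
      ContinuousLinearMap.smul_apply, ContinuousLinearMap.zero_apply, smul_eq_mul] at e2v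
    rw [vMθ, vMΞ, eval2 (fderiv ℝ θ p) (Real.cos (θ p + ω p)) (Real.sin (θ p + ω p)),
      eval2 (fderiv ℝ ω p) (Real.cos (θ p + ω p)) (Real.sin (θ p + ω p))] at e2v
    simp only [Dm, pdx, pdy] at e2v
    linear_combination e2v
  -- symmetry of second derivatives
  have hsymX : fderiv ℝ (fderiv ℝ Ξ) p (Real.cos (θ p - ω p), Real.sin (θ p - ω p)) (Real.cos (θ p + ω p), Real.sin (θ p + ω p)) = fderiv ℝ (fderiv ℝ Ξ) p (Real.cos (θ p + ω p), Real.sin (θ p + ω p)) (Real.cos (θ p - ω p), Real.sin (θ p - ω p)) := hΞC.isSymmSndFDerivAt (by norm_num) _ _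
  have hsymT : fderiv ℝ (fderiv ℝ θ) p (Real.cos (θ p - ω p), Real.sin (θ p - ω p)) (Real.cos (θ p + ω p), Real.sin (θ p + ω p)) = fderiv ℝ (fderiv ℝ θ) p (Real.cos (θ p + ω p), Real.sin (θ p + ω p)) (Real.cos (θ p - ω p), Real.sin (θ p - ω p)) := hθp.isSymmSndFDerivAt (by norm_num) _ _
  -- pointwise system
  have hs1 : (Real.cos (θ p + ω p)*fderiv ℝ θ p (1,0) + Real.sin (θ p + ω p)*fderiv ℝ θ p (0,1)) + Real.sin (2 * ω p) * (Real.cos (θ p + ω p)*fderiv ℝ Ξ p (1,0) + Real.sin (θ p + ω p)*fderiv ℝ Ξ p (0,1)) = 0 := by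
    have h := (hsys p hp).1
    simp only [Dp, pdx, pdy] at h
    linear_combination h
  have hs2' : (Real.cos (θ p - ω p)*fderiv ℝ θ p (1,0) + Real.sin (θ p - ω p)*fderiv ℝ θ p (0,1)) - Real.sin (2 * ω p) * (Real.cos (θ p - ω p)*fderiv ℝ Ξ p (1,0) + Real.sin (θ p - ω p)*fderiv ℝ Ξ p (0,1)) = 0 := by
    have h := (hsys p hp).2
    simp only [Dm, pdx, pdy] at h
    linear_combination h
  -- first derivative of Ξ vs ω
  have hκS : (0:ℝ) < κ + Real.sin (ω p)^2 := by positivity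
  obtain ⟨hW0, hWπ⟩ := hrange p hp
  have hsW : 0 < Real.sin (ω p) := Real.sin_pos_of_pos_of_lt_pi hW0 (by linarith [Real.pi_pos])
  have hcW : 0 < Real.cos (ω p) := Real.cos_pos_of_mem_Ioo ⟨by linarith [Real.pi_pos], hWπ⟩
  have hPX' : Real.cos (ω p) * fderiv ℝ ω p (1,0) = (2*Real.sin (ω p)*(κ+Real.sin (ω p)^2)) * fderiv ℝ Ξ p (1,0) := by
    have : fderiv ℝ Ξ p (1,0) = (Real.cos (ω p)/(2*Real.sin (ω p)*(κ + Real.sin (ω p)^2))) * fderiv ℝ ω p (1,0) := by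
      rw [hLΞ]; simp [smul_eq_mul]
    rw [this]; field_simp
  have hPY' : Real.cos (ω p) * fderiv ℝ ω p (0,1) = (2*Real.sin (ω p)*(κ+Real.sin (ω p)^2)) * fderiv ℝ Ξ p (0,1) := by
    have : fderiv ℝ Ξ p (0,1) = (Real.cos (ω p)/(2*Real.sin (ω p)*(κ + Real.sin (ω p)^2))) * fderiv ℝ ω p (0,1) := by
      rw [hLΞ]; simp [smul_eq_mul]
    rw [this]; field_simp
  -- trig identities
  have hcb : Real.cos (θ p - ω p) = Real.cos (θ p + ω p) * Real.cos (2 * ω p) + Real.sin (θ p + ω p) * Real.sin (2 * ω p) := by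
    rw [show θ p - ω p = (θ p + ω p) - 2*ω p by ring, Real.cos_sub]
  have hsb : Real.sin (θ p - ω p) = Real.sin (θ p + ω p) * Real.cos (2 * ω p) - Real.cos (θ p + ω p) * Real.sin (2 * ω p) := by
    rw [show θ p - ω p = (θ p + ω p) - 2*ω p by ring, Real.sin_sub]
  have hs2t : Real.sin (2 * ω p) = 2 * Real.sin (ω p) * Real.cos (ω p) := by rw [Real.sin_two_mul]
  have hp2 : Real.sin (2 * ω p)^2 + Real.cos (2 * ω p)^2 = 1 := Real.sin_sq_add_cos_sq _
  have hpy : Real.sin (ω p)^2 + Real.cos (ω p)^2 = 1 := Real.sin_sq_add_cos_sq _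
  have hc2t : Real.cos (2 * ω p) = Real.cos (ω p)^2 - Real.sin (ω p)^2 := by rw [Real.cos_two_mul]; linear_combination hpy
  have hS2ne : Real.sin (2 * ω p) ≠ 0 := by rw [hs2t]; positivity
  -- perp-derivative identities
  have g1 : Real.sin (2 * ω p) * (-Real.sin (θ p + ω p)*fderiv ℝ Ξ p (1,0) + Real.cos (θ p + ω p)*fderiv ℝ Ξ p (0,1)) = Real.cos (2 * ω p) * (Real.cos (θ p + ω p)*fderiv ℝ Ξ p (1,0) + Real.sin (θ p + ω p)*fderiv ℝ Ξ p (0,1)) - (Real.cos (θ p - ω p)*fderiv ℝ Ξ p (1,0) + Real.sin (θ p - ω p)*fderiv ℝ Ξ p (0,1)) := by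
    linear_combination fderiv ℝ Ξ p (1,0)*hcb + fderiv ℝ Ξ p (0,1)*hsb
  have g2 : Real.sin (2 * ω p) * (-Real.sin (θ p - ω p)*fderiv ℝ Ξ p (1,0) + Real.cos (θ p - ω p)*fderiv ℝ Ξ p (0,1)) = (Real.cos (θ p + ω p)*fderiv ℝ Ξ p (1,0) + Real.sin (θ p + ω p)*fderiv ℝ Ξ p (0,1)) - Real.cos (2 * ω p) * (Real.cos (θ p - ω p)*fderiv ℝ Ξ p (1,0) + Real.sin (θ p - ω p)*fderiv ℝ Ξ p (0,1)) := by
    linear_combination fderiv ℝ Ξ p (1,0)*(Real.cos (2 * ω p)*hcb - Real.sin (2 * ω p)*hsb + Real.cos (θ p + ω p)*hp2)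
      + fderiv ℝ Ξ p (0,1)*(Real.sin (2 * ω p)*hcb + Real.cos (2 * ω p)*hsb + Real.sin (θ p + ω p)*hp2)
  have g1T : Real.sin (2 * ω p) * (-Real.sin (θ p + ω p)*fderiv ℝ θ p (1,0) + Real.cos (θ p + ω p)*fderiv ℝ θ p (0,1)) = Real.cos (2 * ω p) * (Real.cos (θ p + ω p)*fderiv ℝ θ p (1,0) + Real.sin (θ p + ω p)*fderiv ℝ θ p (0,1)) - (Real.cos (θ p - ω p)*fderiv ℝ θ p (1,0) + Real.sin (θ p - ω p)*fderiv ℝ θ p (0,1)) := by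
    linear_combination fderiv ℝ θ p (1,0)*hcb + fderiv ℝ θ p (0,1)*hsb
  have g2T : Real.sin (2 * ω p) * (-Real.sin (θ p - ω p)*fderiv ℝ θ p (1,0) + Real.cos (θ p - ω p)*fderiv ℝ θ p (0,1)) = (Real.cos (θ p + ω p)*fderiv ℝ θ p (1,0) + Real.sin (θ p + ω p)*fderiv ℝ θ p (0,1)) - Real.cos (2 * ω p) * (Real.cos (θ p - ω p)*fderiv ℝ θ p (1,0) + Real.sin (θ p - ω p)*fderiv ℝ θ p (0,1)) := by
    linear_combination fderiv ℝ θ p (1,0)*(Real.cos (2 * ω p)*hcb - Real.sin (2 * ω p)*hsb + Real.cos (θ p + ω p)*hp2)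
      + fderiv ℝ θ p (0,1)*(Real.sin (2 * ω p)*hcb + Real.cos (2 * ω p)*hsb + Real.sin (θ p + ω p)*hp2)
  obtain ⟨keyM, keyN⟩ := algM _ _ _ _ _ _ _ _ _ _ _ _ _ _ _ _ hS2ne e1 e2 hsymX hsymT
    hs1 hs2' g1 g2 g1T g2T
  have hOw : Real.cos (ω p) * (Real.cos (θ p + ω p)*fderiv ℝ ω p (1,0) + Real.sin (θ p + ω p)*fderiv ℝ ω p (0,1))
      = 2*Real.sin (ω p)*(κ+Real.sin (ω p)^2) * (Real.cos (θ p + ω p)*fderiv ℝ Ξ p (1,0) + Real.sin (θ p + ω p)*fderiv ℝ Ξ p (0,1)) := by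
    linear_combination (Real.cos (θ p + ω p))*hPX' + (Real.sin (θ p + ω p))*hPY'
  have hOv : Real.cos (ω p) * (Real.cos (θ p - ω p)*fderiv ℝ ω p (1,0) + Real.sin (θ p - ω p)*fderiv ℝ ω p (0,1))
      = 2*Real.sin (ω p)*(κ+Real.sin (ω p)^2) * (Real.cos (θ p - ω p)*fderiv ℝ Ξ p (1,0) + Real.sin (θ p - ω p)*fderiv ℝ Ξ p (0,1)) := by
    linear_combination (Real.cos (θ p - ω p))*hPX' + (Real.sin (θ p - ω p))*hPY'
  have keyM' := mul_left_cancel₀ hS2ne keyM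
  have keyN' := mul_left_cancel₀ hS2ne keyN
  constructor
  · have hMrw : Dm θ ω (fun q => Dp θ ω Ξ q) p = DPΞ (Real.cos (θ p - ω p), Real.sin (θ p - ω p)) := by
      simp only [Dm, pdx, pdy, hDPΞ.fderiv]
      exact (eval2 _ _ _).symm
    rw [hMrw, vPΞ, eval2 (fderiv ℝ θ p) (Real.cos (θ p - ω p)) (Real.sin (θ p - ω p)), eval2 (fderiv ℝ ω p) (Real.cos (θ p - ω p)) (Real.sin (θ p - ω p))]
    simp only [Dp, Dm, pdx, pdy]
    exact algFin _ _ _ _ _ _ _ _ _ hsW hcW keyM' hOw hs2t hc2t hpy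
  · have hNrw : Dp θ ω (fun q => Dm θ ω Ξ q) p = DMΞ (Real.cos (θ p + ω p), Real.sin (θ p + ω p)) := by
      simp only [Dp, pdx, pdy, hDMΞ.fderiv]
      exact (eval2 _ _ _).symm
    rw [hNrw, vMΞ, eval2 (fderiv ℝ θ p) (Real.cos (θ p + ω p)) (Real.sin (θ p + ω p)), eval2 (fderiv ℝ ω p) (Real.cos (θ p + ω p)) (Real.sin (θ p + ω p))]
    simp only [Dp, Dm, pdx, pdy]
    exact algFin _ _ _ _ _ _ _ _ _ hsW hcW keyN' hOv hs2t hc2t hpy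
end

section
/- Linearization by inversion ((3.6) implies (3.8)). Let κ > 0 and let D ⊂ {(t,r) ∈ ℝ² : 0 < t < 1} be open. Set F(t) = (1−t²)(κ+1−t²) and λ(t) = √(1−t²)·t²/F(t). Let (U, V) : D → ℝ² be C¹ with U(t,r) ≠ 0 and V(t,r) ≠ 0 on D, satisfying system (3.6): ∂_t U + λ(t)·∂_r U = −((κ+1)U/(2F(t)V))·(U+V)/t + ((κ+2−2t²)/F(t))·U·t and ∂_t V − λ(t)·∂_r V = −((κ+1)V/(2F(t)U))·(U+V)/t + ((κ+2−2t²)/F(t))·V·t. Then the functions Ū := 1/U and V̄ := −1/V satisfy on D the linear system (3.8): ∂_t Ū + λ(t)·∂_r Ū = (Ū−V̄)/(2t) + ((κ+2−t²)·t/(2F(t)))·(Ū−V̄) − ((κ+2−2t²)·t/F(t))·Ū and ∂_t V̄ − λ(t)·∂_r V̄ = (V̄−Ū)/(2t) − ((κ+2−t²)·t/(2F(t)))·(Ū−V̄) − ((κ+2−2t²)·t/F(t))·V̄. -/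
/-- Partial derivative in the first (t) variable. -/
noncomputable def pdt (f : ℝ × ℝ → ℝ) (p : ℝ × ℝ) : ℝ := fderiv ℝ f p (1, 0)

/-- Partial derivative in the second (r) variable. -/
noncomputable def pdr (f : ℝ × ℝ → ℝ) (p : ℝ × ℝ) : ℝ := fderiv ℝ f p (0, 1)

set_option maxHeartbeats 2000000 in
/-- Linearization by inversion ((3.6) implies (3.8)). -/
theorem stmt_11 (κ : ℝ) (hκ : 0 < κ)
    (D : Set (ℝ × ℝ)) (hD : IsOpen D) (hDsub : D ⊆ {p : ℝ × ℝ | 0 < p.1 ∧ p.1 < 1})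
    (F lam : ℝ → ℝ)
    (hF : ∀ t, F t = (1 - t^2) * (κ + 1 - t^2))
    (hlam : ∀ t, lam t = Real.sqrt (1 - t^2) * t^2 / F t)
    (U V : ℝ × ℝ → ℝ)
    (hU : ContDiffOn ℝ 1 U D) (hV : ContDiffOn ℝ 1 V D)
    (hUne : ∀ p ∈ D, U p ≠ 0) (hVne : ∀ p ∈ D, V p ≠ 0)
    (hsys : ∀ p ∈ D,
      pdt U p + lam p.1 * pdr U p =
        -((κ + 1) * U p / (2 * F p.1 * V p)) * ((U p + V p)/p.1)
        + ((κ + 2 - 2*p.1^2)/F p.1) * U p * p.1 ∧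
      pdt V p - lam p.1 * pdr V p =
        -((κ + 1) * V p / (2 * F p.1 * U p)) * ((U p + V p)/p.1)
        + ((κ + 2 - 2*p.1^2)/F p.1) * V p * p.1) :
    ∀ p ∈ D,
      pdt (fun q => 1 / U q) p + lam p.1 * pdr (fun q => 1 / U q) p =
        (1 / U p - -(1 / V p)) / (2 * p.1)
        + ((κ + 2 - p.1^2) * p.1 / (2 * F p.1)) * (1 / U p - -(1 / V p))
        - ((κ + 2 - 2*p.1^2) * p.1 / F p.1) * (1 / U p) ∧
      pdt (fun q => -(1 / V q)) p - lam p.1 * pdr (fun q => -(1 / V q)) p =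
        (-(1 / V p) - 1 / U p) / (2 * p.1)
        - ((κ + 2 - p.1^2) * p.1 / (2 * F p.1)) * (1 / U p - -(1 / V p))
        - ((κ + 2 - 2*p.1^2) * p.1 / F p.1) * (-(1 / V p)) := by
  intro p hp
  obtain ⟨ht0, ht1⟩ := hDsub hp
  have hUne' := hUne p hp
  have hVne' := hVne p hp
  have hnhds : D ∈ nhds p := hD.mem_nhds hp
  have hUd : HasFDerivAt U (fderiv ℝ U p) p :=
    ((hU.contDiffAt hnhds).differentiableAt one_ne_zero).hasFDerivAt
  have hVd : HasFDerivAt V (fderiv ℝ V p) p :=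
    ((hV.contDiffAt hnhds).differentiableAt one_ne_zero).hasFDerivAt
  have hUinv : HasFDerivAt (fun q => 1 / U q)
      (-(U p ^ 2)⁻¹ • fderiv ℝ U p) p := by
    have h := (hasDerivAt_inv hUne').comp_hasFDerivAt p hUd
    simp only [one_div, Function.comp_def] at h ⊢
    exact h.congr_fderiv (by ext <;> simp)
  have hVinv : HasFDerivAt (fun q => -(1 / V q))
      (-(-(V p ^ 2)⁻¹ • fderiv ℝ V p)) p := by
    have h := ((hasDerivAt_inv hVne').comp_hasFDerivAt p hVd).neg
    simp only [one_div, Function.comp_def, Pi.neg_def] at h ⊢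
    exact h.congr_fderiv (by ext <;> simp)
  have eUt : pdt (fun q => 1 / U q) p = -(U p ^ 2)⁻¹ * pdt U p := by
    rw [pdt, pdt, hUinv.fderiv]; simp
  have eUr : pdr (fun q => 1 / U q) p = -(U p ^ 2)⁻¹ * pdr U p := by
    rw [pdr, pdr, hUinv.fderiv]; simp
  have eVt : pdt (fun q => -(1 / V q)) p = (V p ^ 2)⁻¹ * pdt V p := by
    rw [pdt, pdt, hVinv.fderiv]; simp
  have eVr : pdr (fun q => -(1 / V q)) p = (V p ^ 2)⁻¹ * pdr V p := by
    rw [pdr, pdr, hVinv.fderiv]; simp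
  obtain ⟨h1, h2⟩ := hsys p hp
  have htne : p.1 ≠ 0 := ne_of_gt ht0
  have h1t : (0:ℝ) < 1 - p.1 ^ 2 := by nlinarith
  have h1tne : (1:ℝ) - p.1 ^ 2 ≠ 0 := ne_of_gt h1t
  have h2tne : κ + 1 - p.1 ^ 2 ≠ 0 := by nlinarith
  constructor
  · rw [eUt, eUr]
    have : -(U p ^ 2)⁻¹ * pdt U p + lam p.1 * (-(U p ^ 2)⁻¹ * pdr U p)
        = -(U p ^ 2)⁻¹ * (pdt U p + lam p.1 * pdr U p) := by ring
    rw [this, h1, hF]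
    field_simp
    ring
  · rw [eVt, eVr]
    have : (V p ^ 2)⁻¹ * pdt V p - lam p.1 * ((V p ^ 2)⁻¹ * pdr V p)
        = (V p ^ 2)⁻¹ * (pdt V p - lam p.1 * pdr V p) := by ring
    rw [this, h2, hF]
    field_simp
    ring
end

section
/- Verification identities (4.17)–(4.18). Let κ > 0, t ∈ (0,1), and let r, θ̂₁, Ū, V̄ be real numbers with Ū ≠ 0 and V̄ ≠ 0. Set θ = θ̂₁ − r, ϖ = √(1−t²), ω = arccos t (so cos ω = t, sin ω = ϖ), α = θ + ω, W̄ = (Ū − V̄)/t, and F₁ = t·sin(θ̂₁−r) − ϖ·cos(θ̂₁−r), F₂ = t·sin(θ̂₁−r) + ϖ·cos(θ̂₁−r), F₃ = t·cos(θ̂₁−r) + ϖ·sin(θ̂₁−r), F₄ = t·cos(θ̂₁−r) − ϖ·sin(θ̂₁−r). Define (as in (4.10)) θ_x = (F₁V̄ − F₂Ū)/(ŪV̄), θ_y = (F₄Ū − F₃V̄)/(ŪV̄), ϖ_x = −((κ+1−t²)/(ŪV̄))·( sin(θ̂₁−r)·(Ū+V̄) + ϖ·cos(θ̂₁−r)·W̄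 ), ϖ_y = ((κ+1−t²)/(ŪV̄))·( cos(θ̂₁−r)·(Ū+V̄) − ϖ·sin(θ̂₁−r)·W̄ ). Then: cos α·θ_x + sin α·θ_y = −2tϖ/Ū, cos α·ϖ_x + sin α·ϖ_y = 2(κ+ϖ²)ϖ/Ū, and consequently (cos α·θ_x + sin α·θ_y) + (cos ω/(κ+ϖ²))·(cos α·ϖ_x + sin α·ϖ_y) = 0, i.e. the first equation of system (2.10) holds identically. -/
/-- Verification identities (4.17)–(4.18). -/
theorem stmt_17 (κ t r θ₁ Ub Vb : ℝ) (hκ : 0 < κ) (ht : t ∈ Set.Ioo (0:ℝ) 1)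
    (hUb : Ub ≠ 0) (hVb : Vb ≠ 0)
    (θ ϖ ω α Wb F₁ F₂ F₃ F₄ θx θy ϖx ϖy : ℝ)
    (hθ : θ = θ₁ - r)
    (hϖ : ϖ = Real.sqrt (1 - t^2))
    (hω : ω = Real.arccos t)
    (hα : α = θ + ω)
    (hWb : Wb = (Ub - Vb)/t)
    (hF₁ : F₁ = t * Real.sin (θ₁ - r) - ϖ * Real.cos (θ₁ - r))
    (hF₂ : F₂ = t * Real.sin (θ₁ - r) + ϖ * Real.cos (θ₁ - r))
    (hF₃ : F₃ = t * Real.cos (θ₁ - r) + ϖ * Real.sin (θ₁ - r))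
    (hF₄ : F₄ = t * Real.cos (θ₁ - r) - ϖ * Real.sin (θ₁ - r))
    (hθx : θx = (F₁ * Vb - F₂ * Ub)/(Ub * Vb))
    (hθy : θy = (F₄ * Ub - F₃ * Vb)/(Ub * Vb))
    (hϖx : ϖx = -((κ + 1 - t^2)/(Ub * Vb)) *
      (Real.sin (θ₁ - r) * (Ub + Vb) + ϖ * Real.cos (θ₁ - r) * Wb))
    (hϖy : ϖy = ((κ + 1 - t^2)/(Ub * Vb)) *
      (Real.cos (θ₁ - r) * (Ub + Vb) - ϖ * Real.sin (θ₁ - r) * Wb)) :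
    Real.cos α * θx + Real.sin α * θy = -(2 * t * ϖ)/Ub ∧
    Real.cos α * ϖx + Real.sin α * ϖy = 2 * (κ + ϖ^2) * ϖ / Ub ∧
    (Real.cos α * θx + Real.sin α * θy)
      + (Real.cos ω/(κ + ϖ^2)) * (Real.cos α * ϖx + Real.sin α * ϖy) = 0 := by
  obtain ⟨ht0, ht1⟩ := ht
  have ht0' : t ≠ 0 := ne_of_gt ht0
  have hϖ2 : ϖ ^ 2 = 1 - t ^ 2 := by
    rw [hϖ, Real.sq_sqrt]; nlinarith
  have hcosω : Real.cos ω = t := by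
    rw [hω, Real.cos_arccos] <;> linarith
  have hsinω : Real.sin ω = ϖ := by
    rw [hω, Real.sin_arccos, hϖ]
  have hcosα : Real.cos α = Real.cos (θ₁ - r) * t - Real.sin (θ₁ - r) * ϖ := by
    rw [hα, Real.cos_add, hcosω, hsinω, hθ]
  have hsinα : Real.sin α = Real.sin (θ₁ - r) * t + Real.cos (θ₁ - r) * ϖ := by
    rw [hα, Real.sin_add, hcosω, hsinω, hθ]
  have hpyth : Real.sin (θ₁ - r) ^ 2 + Real.cos (θ₁ - r) ^ 2 = 1 :=
    Real.sin_sq_add_cos_sq _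
  have hden : κ + ϖ ^ 2 ≠ 0 := by rw [hϖ2]; nlinarith
  set s := Real.sin (θ₁ - r)
  set c := Real.cos (θ₁ - r)
  have htW : t * Wb = Ub - Vb := by rw [hWb]; field_simp
  have h1 : Real.cos α * θx + Real.sin α * θy = -(2 * t * ϖ)/Ub := by
    rw [hcosα, hsinα, hθx, hθy, hF₁, hF₂, hF₃, hF₄]
    field_simp
    linear_combination (-(t*ϖ*Vb*2)) * hpyth
  have hK : κ + ϖ^2 = κ + 1 - t^2 := by rw [hϖ2]; ring
  have h2 : Real.cos α * ϖx + Real.sin α * ϖy = 2 * (κ + ϖ^2) * ϖ / Ub := by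
    have key : Real.cos α * ϖx + Real.sin α * ϖy
        = (κ + 1 - t^2)/(Ub*Vb) * (2*ϖ*Vb) := by
      have hb : 2*ϖ*Vb = ϖ*(Ub+Vb) - ϖ*(t*Wb) := by rw [htW]; ring
      rw [hcosα, hsinα, hϖx, hϖy, hb]
      linear_combination ((κ+1-t^2)/(Ub*Vb)) * (ϖ*(Ub+Vb) - ϖ*(t*Wb)) * hpyth
    rw [key, hK]
    field_simp
  refine ⟨h1, h2, ?_⟩
  rw [h1, h2, hcosω]
  field_simp
  ring
end

section
/- Image of positive characteristics is a negative characteristic (slope identity from (4.16)). Let κ > 0, t ∈ (0,1), and let r, θ̂₁, U, V be real numbers with U ≠ 0. Set λ = √(1−t²)·t²/F with F = (1−t²)(κ+1−t²), and define F₁ = t·sin(θ̂₁−r) − √(1−t²)·cos(θ̂₁−r), F₂ = t·sin(θ̂₁−r) + √(1−t²)·cos(θ̂₁−r), F₃ = t·cos(θ̂₁−r) + √(1−t²)·sin(θ̂₁−r), F₄ = t·cos(θ̂₁−r) − √(1−t²)·sin(θ̂₁−r), together with θ_x = F₁U + F₂V, θ_y = −F₃U − F₄V, ω_x = −((κ+1−t²)/t²)·(F₁U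 − F₂V), ω_y = ((κ+1−t²)/t²)·(F₃U − F₄V). If F₃ ≠ 0, then λ·√(1−t²)·ω_y − θ_y = 2F₃U ≠ 0 and −(λ·√(1−t²)·ω_x − θ_x)/(λ·√(1−t²)·ω_y − θ_y) = F₁/F₃ = tan((θ̂₁ − r) − arccos t), i.e. the slope dy/dx computed along the curve r(x,y) = r₊(t(x,y)) equals tan(θ − ω) = Λ₋, the negative characteristic slope. -/
/-- Image of positive characteristics is a negative characteristic
(slope identity from (4.16)). -/
theorem stmt_18 (κ t r θ₁ U V : ℝ) (hκ : 0 < κ) (ht : t ∈ Set.Ioo (0:ℝ) 1)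
    (hU : U ≠ 0)
    (F lam F₁ F₂ F₃ F₄ θx θy ωx ωy : ℝ)
    (hF : F = (1 - t^2) * (κ + 1 - t^2))
    (hlam : lam = Real.sqrt (1 - t^2) * t^2 / F)
    (hF₁ : F₁ = t * Real.sin (θ₁ - r) - Real.sqrt (1 - t^2) * Real.cos (θ₁ - r))
    (hF₂ : F₂ = t * Real.sin (θ₁ - r) + Real.sqrt (1 - t^2) * Real.cos (θ₁ - r))
    (hF₃ : F₃ = t * Real.cos (θ₁ - r) + Real.sqrt (1 - t^2) * Real.sin (θ₁ - r))
    (hF₄ : F₄ = t * Real.cos (θ₁ - r) - Real.sqrt (1 - t^2) * Real.sin (θ₁ - r))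
    (hθx : θx = F₁ * U + F₂ * V)
    (hθy : θy = -(F₃ * U) - F₄ * V)
    (hωx : ωx = -((κ + 1 - t^2)/t^2) * (F₁ * U - F₂ * V))
    (hωy : ωy = ((κ + 1 - t^2)/t^2) * (F₃ * U - F₄ * V))
    (hF₃ne : F₃ ≠ 0) :
    lam * Real.sqrt (1 - t^2) * ωy - θy = 2 * F₃ * U ∧
    2 * F₃ * U ≠ 0 ∧
    -((lam * Real.sqrt (1 - t^2) * ωx - θx)/(lam * Real.sqrt (1 - t^2) * ωy - θy))
      = F₁ / F₃ ∧
    F₁ / F₃ = Real.tan ((θ₁ - r) - Real.arccos t) := by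

  obtain ⟨ht0, ht1⟩ := ht
  have h1t2 : (0:ℝ) < 1 - t^2 := by nlinarith
  have hκt : (0:ℝ) < κ + 1 - t^2 := by nlinarith
  have hFpos : (0:ℝ) < F := by rw [hF]; positivity
  have hsq : Real.sqrt (1 - t^2) ^ 2 = 1 - t^2 := Real.sq_sqrt h1t2.le
  have hkey : lam * Real.sqrt (1 - t^2) = t^2 / (κ + 1 - t^2) := by
    rw [hlam, hF]
    field_simp
    ring_nf
    nlinarith [hsq]
  have ht2 : t^2 ≠ 0 := by positivity
  have hA : lam * Real.sqrt (1 - t^2) * ωy - θy = 2 * F₃ * U := by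
    rw [hkey, hωy, hθy]
    field_simp
    ring
  have hB : 2 * F₃ * U ≠ 0 := by
    simp [hF₃ne, hU]
  refine ⟨hA, hB, ?_, ?_⟩
  · have hAx : lam * Real.sqrt (1 - t^2) * ωx - θx = -(2 * F₁ * U) := by
      rw [hkey, hωx, hθx]
      field_simp
      ring
    rw [hA, hAx]
    rw [neg_div, neg_neg]
    rw [div_eq_div_iff hB hF₃ne]
    ring
  · have hcos : Real.cos (Real.arccos t) = t := Real.cos_arccos (by linarith) (by linarith)
    have hsin : Real.sin (Real.arccos t) = Real.sqrt (1 - t^2) := by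
      rw [Real.sin_arccos]
    have hs : Real.sin ((θ₁ - r) - Real.arccos t) = F₁ := by
      rw [Real.sin_sub, hcos, hsin, hF₁]; ring
    have hc : Real.cos ((θ₁ - r) - Real.arccos t) = F₃ := by
      rw [Real.cos_sub, hcos, hsin, hF₃]; ring
    rw [Real.tan_eq_sin_div_cos, hs, hc]
end
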